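/- arXiv:1601.01858 — 2 statements merged into one kernel-verified Lean document; each statement's English description precedes it below -/
import Mathlib

section
/- Let R₁ > 0, R₂ > 0 be reals and let c₁, c₂ be points of the Euclidean plane ℝ² with d = dist(c₁, c₂) satisfying |R₁ − R₂| < d < R₁ + R₂. Then the two-dimensional Lebesgue measure of the intersection of the closed discs B(c₁, R₁) and B(c₂, R₂) equals R₁²·arccos((d² + R₁² − R₂²)/(2·d·R₁)) + R₂²·arccos((d² + R₂² − R₁²)/(2·d·R₂)) − (1/2)·√((−d + R₁ + R₂)·(d + R₁ − R₂)·(d − R₁ + R₂)·(d + R₁ + R₂)). (This is the area lens(M₁, M₂) of the lens formed by the intersecting backhaul disc and inner macro-exclusion disc that appears in Case (B) of the joint pdf Lemmas.) -/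
open Real MeasureTheory

lemma seg_hasDerivAt (R c : ℝ) (hR : 0 < R) {y : ℝ} (h1 : c - R < y) (h2 : y < c + R) :
    HasDerivAt (fun x => (x - c) * Real.sqrt (R^2 - (x - c)^2) + R^2 * Real.arcsin ((x - c)/R))
      (2 * Real.sqrt (R^2 - (y - c)^2)) y := by
  have hs : 0 < R^2 - (y - c)^2 := by nlinarith
  have hsq : 0 < Real.sqrt (R^2 - (y - c)^2) := Real.sqrt_pos.2 hs
  have hz1 : (y - c)/R ≠ -1 := by
    intro h
    have : y - c = -R := by field_simp at h; linarith
    linarith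
  have hz2 : (y - c)/R ≠ 1 := by
    intro h
    have : y - c = R := by field_simp at h; linarith
    linarith
  have hsub : HasDerivAt (fun x : ℝ => x - c) 1 y := (hasDerivAt_id y).sub_const c
  have hinner : HasDerivAt (fun x : ℝ => R^2 - (x - c)^2) (-(2*(y-c))) y := by
    have := (hasDerivAt_const y (R^2)).sub (hsub.pow 2)
    exact this.congr_deriv (by simp)
  have hsqrt : HasDerivAt (fun x : ℝ => Real.sqrt (R^2 - (x - c)^2))
      ((1 / (2 * Real.sqrt (R^2 - (y-c)^2))) * (-(2*(y-c)))) y :=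
    (Real.hasDerivAt_sqrt hs.ne').comp y hinner
  have hmul : HasDerivAt (fun x : ℝ => (x - c) * Real.sqrt (R^2 - (x - c)^2))
      (1 * Real.sqrt (R^2 - (y-c)^2) + (y - c) * ((1 / (2 * Real.sqrt (R^2 - (y-c)^2))) * (-(2*(y-c))))) y :=
    hsub.mul hsqrt
  have harcsin : HasDerivAt (fun x : ℝ => R^2 * Real.arcsin ((x - c)/R))
      (R^2 * ((1 / Real.sqrt (1 - ((y-c)/R)^2)) * (1/R))) y := by
    have h1 := (Real.hasDerivAt_arcsin hz1 hz2).comp y (hsub.div_const R)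
    simpa [mul_comm] using (h1.const_mul (R^2))
  have htotal := hmul.add harcsin
  refine htotal.congr_deriv (Eq.symm ?_)
  have hroot : Real.sqrt (1 - ((y-c)/R)^2) = Real.sqrt (R^2 - (y-c)^2) / R := by
    have h : 1 - ((y-c)/R)^2 = (R^2 - (y-c)^2)/R^2 := by field_simp
    rw [h, Real.sqrt_div hs.le, Real.sqrt_sq hR.le]
  rw [hroot]
  have hss := Real.mul_self_sqrt hs.le
  field_simp
  linear_combination hss

lemma seg_integral (R c a b : ℝ) (hR : 0 < R) (ha : c - R ≤ a) (hb : b ≤ c + R) (hab : a ≤ b) :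
    ∫ x in a..b, 2 * Real.sqrt (R^2 - (x - c)^2) =
      ((b - c) * Real.sqrt (R^2 - (b - c)^2) + R^2 * Real.arcsin ((b - c)/R))
      - ((a - c) * Real.sqrt (R^2 - (a - c)^2) + R^2 * Real.arcsin ((a - c)/R)) := by
  have hcF : Continuous (fun x : ℝ => (x - c) * Real.sqrt (R^2 - (x - c)^2)
      + R^2 * Real.arcsin ((x - c)/R)) := by
    apply Continuous.add
    · exact (continuous_id.sub continuous_const).mul
        ((continuous_const.sub ((continuous_id.sub continuous_const).pow 2)).sqrt)
    · exact continuous_const.mul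
        (Real.continuous_arcsin.comp ((continuous_id.sub continuous_const).div_const R))
  apply intervalIntegral.integral_eq_sub_of_hasDerivAt_of_le hab hcF.continuousOn
  · intro x hx
    exact seg_hasDerivAt R c hR (lt_of_le_of_lt ha hx.1) (lt_of_lt_of_le hx.2 hb)
  · exact (continuous_const.mul
      ((continuous_const.sub ((continuous_id.sub continuous_const).pow 2)).sqrt)).intervalIntegrable a b

lemma lens_core (R₁ R₂ d : ℝ) (hR₁ : 0 < R₁) (hR₂ : 0 < R₂)
    (hlow : |R₁ - R₂| < d) (hhigh : d < R₁ + R₂) :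
    volume {p : ℝ × ℝ | p.1 ^ 2 + p.2 ^ 2 ≤ R₁ ^ 2 ∧ (p.1 - d) ^ 2 + p.2 ^ 2 ≤ R₂ ^ 2}
      = ENNReal.ofReal
          (R₁ ^ 2 * Real.arccos ((d ^ 2 + R₁ ^ 2 - R₂ ^ 2) / (2 * d * R₁))
            + R₂ ^ 2 * Real.arccos ((d ^ 2 + R₂ ^ 2 - R₁ ^ 2) / (2 * d * R₂))
            - (1 / 2) * Real.sqrt ((-d + R₁ + R₂) * (d + R₁ - R₂)
                * (d - R₁ + R₂) * (d + R₁ + R₂))) := by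
  have hd : 0 < d := lt_of_le_of_lt (abs_nonneg _) hlow
  obtain ⟨h1, h2⟩ := abs_lt.1 hlow
  -- h1 : -d < R₁ - R₂, h2 : R₁ - R₂ < d
  set x₀ : ℝ := (d^2 + R₁^2 - R₂^2)/(2*d) with hx₀def
  have hx₀R : x₀ < R₁ := by
    rw [hx₀def, div_lt_iff₀ (by linarith)]; nlinarith
  have hx₀l : d - R₂ < x₀ := by
    rw [hx₀def, lt_div_iff₀ (by linarith)]; nlinarith
  have hlR : d - R₂ < R₁ := by linarith
  set m : ℝ → ℝ := fun x => min (R₁^2 - x^2) (R₂^2 - (x - d)^2) with hmdef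
  have hm_cont : Continuous m := by
    apply Continuous.min
    · exact continuous_const.sub (continuous_id.pow 2)
    · exact continuous_const.sub ((continuous_id.sub continuous_const).pow 2)
  set f : ℝ → ℝ := fun x => 2 * Real.sqrt (m x) with hfdef
  have hf_cont : Continuous f := continuous_const.mul hm_cont.sqrt
  have hf_zero : ∀ x, x ∉ Set.Icc (d - R₂) R₁ → f x = 0 := by
    intro x hx
    rw [Set.mem_Icc, not_and_or, not_le, not_le] at hx
    have hmx : m x < 0 := by
      rcases hx with h | h
      · exact lt_of_le_of_lt (min_le_right _ _) (by nlinarith)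
      · exact lt_of_le_of_lt (min_le_left _ _) (by nlinarith)
    simp [hfdef, Real.sqrt_eq_zero'.2 hmx.le]
  have hf_nonneg : ∀ x, 0 ≤ f x := fun x => by positivity
  -- measurability of the set
  have hS : MeasurableSet {p : ℝ × ℝ | p.1 ^ 2 + p.2 ^ 2 ≤ R₁ ^ 2 ∧ (p.1 - d) ^ 2 + p.2 ^ 2 ≤ R₂ ^ 2} := by
    have heq : {p : ℝ × ℝ | p.1 ^ 2 + p.2 ^ 2 ≤ R₁ ^ 2 ∧ (p.1 - d) ^ 2 + p.2 ^ 2 ≤ R₂ ^ 2}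
        = {p : ℝ × ℝ | p.1 ^ 2 + p.2 ^ 2 ≤ R₁ ^ 2} ∩ {p : ℝ × ℝ | (p.1 - d) ^ 2 + p.2 ^ 2 ≤ R₂ ^ 2} := rfl
    rw [heq]
    exact ((isClosed_le (by fun_prop) continuous_const).measurableSet).inter
      ((isClosed_le (by fun_prop) continuous_const).measurableSet)
  -- slicing
  have hslice : ∀ x : ℝ,
      volume {y : ℝ | x ^ 2 + y ^ 2 ≤ R₁ ^ 2 ∧ (x - d) ^ 2 + y ^ 2 ≤ R₂ ^ 2}
        = ENNReal.ofReal (f x) := by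
    intro x
    have hset : {y : ℝ | x ^ 2 + y ^ 2 ≤ R₁ ^ 2 ∧ (x - d) ^ 2 + y ^ 2 ≤ R₂ ^ 2}
        = {y : ℝ | y^2 ≤ m x} := by
      ext y
      simp only [Set.mem_setOf_eq, hmdef, le_min_iff]
      constructor
      · rintro ⟨hy1, hy2⟩; constructor <;> linarith
      · rintro ⟨hy1, hy2⟩; constructor <;> linarith
    rw [hset]
    by_cases hm : 0 ≤ m x
    · have : {y : ℝ | y^2 ≤ m x} = Set.Icc (-Real.sqrt (m x)) (Real.sqrt (m x)) := by
        ext y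
        simp only [Set.mem_setOf_eq, Set.mem_Icc, ← abs_le]
        constructor
        · intro h; exact Real.abs_le_sqrt h
        · intro h
          calc y^2 = |y|^2 := (sq_abs y).symm
            _ ≤ (Real.sqrt (m x))^2 := pow_le_pow_left₀ (abs_nonneg y) h 2
            _ = m x := Real.sq_sqrt hm
      rw [this, Real.volume_Icc]
      congr 1
      simp [hfdef]; ring
    · push_neg at hm
      have : {y : ℝ | y^2 ≤ m x} = ∅ := by
        ext y; simp only [Set.mem_setOf_eq, Set.mem_empty_iff_false, iff_false]
        intro h; nlinarith [sq_nonneg y]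
      rw [this, measure_empty]
      simp [hfdef, Real.sqrt_eq_zero'.2 hm.le]
  -- volume as lintegral
  have hvol : volume {p : ℝ × ℝ | p.1 ^ 2 + p.2 ^ 2 ≤ R₁ ^ 2 ∧ (p.1 - d) ^ 2 + p.2 ^ 2 ≤ R₂ ^ 2}
      = ∫⁻ x : ℝ, ENNReal.ofReal (f x) := by
    rw [MeasureTheory.Measure.volume_eq_prod, Measure.prod_apply hS]
    apply lintegral_congr
    intro x
    rw [← hslice x]
    congr 1
  rw [hvol]
  -- to Bochner integral
  have hsupp : HasCompactSupport f :=
    HasCompactSupport.intro isCompact_Icc hf_zero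
  have hint : Integrable f := hf_cont.integrable_of_hasCompactSupport hsupp
  rw [← MeasureTheory.ofReal_integral_eq_lintegral_ofReal hint
    (Filter.Eventually.of_forall hf_nonneg)]
  congr 1
  -- restrict to Icc and interval integral
  rw [← MeasureTheory.setIntegral_eq_integral_of_forall_compl_eq_zero hf_zero (μ := volume),
    MeasureTheory.integral_Icc_eq_integral_Ioc, ← intervalIntegral.integral_of_le hlR.le]
  -- split at x₀
  have hi1 : IntervalIntegrable f volume (d - R₂) x₀ := hf_cont.intervalIntegrable _ _
  have hi2 : IntervalIntegrable f volume x₀ R₁ := hf_cont.intervalIntegrable _ _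
  rw [← intervalIntegral.integral_add_adjacent_intervals hi1 hi2]
  -- identify the two pieces
  have hpiece1 : ∫ x in (d - R₂)..x₀, f x = ∫ x in (d - R₂)..x₀, 2 * Real.sqrt (R₂^2 - (x - d)^2) := by
    apply intervalIntegral.integral_congr
    intro x hx
    rw [Set.uIcc_of_le hx₀l.le] at hx
    have : m x = R₂^2 - (x - d)^2 := by
      apply min_eq_right
      have hxle : x ≤ x₀ := hx.2
      rw [hx₀def, le_div_iff₀ (by linarith)] at hxle
      nlinarith
    simp [hfdef, this]
  have hpiece2 : ∫ x in x₀..R₁, f x = ∫ x in x₀..R₁, 2 * Real.sqrt (R₁^2 - (x - 0)^2) := by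
    apply intervalIntegral.integral_congr
    intro x hx
    rw [Set.uIcc_of_le hx₀R.le] at hx
    have : m x = R₁^2 - x^2 := by
      apply min_eq_left
      have hxge : x₀ ≤ x := hx.1
      rw [hx₀def, div_le_iff₀ (by linarith)] at hxge
      nlinarith
    simp [hfdef, this]
  rw [hpiece1, hpiece2]
  rw [seg_integral R₂ d (d - R₂) x₀ hR₂ (by linarith) (by linarith) hx₀l.le,
    seg_integral R₁ 0 x₀ R₁ hR₁ (by linarith) (by linarith) hx₀R.le]
  -- now pure algebra
  have e0 : d - R₂ - d = -R₂ := by ring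
  have harg1 : x₀ / R₁ = (d ^ 2 + R₁ ^ 2 - R₂ ^ 2) / (2 * d * R₁) := by
    rw [hx₀def]; field_simp; try ring
  have harg2 : (x₀ - d) / R₂ = -((d ^ 2 + R₂ ^ 2 - R₁ ^ 2) / (2 * d * R₂)) := by
    rw [hx₀def]; field_simp; try ring
  have hsame : R₂^2 - (x₀ - d)^2 = R₁^2 - x₀^2 := by
    rw [hx₀def]; field_simp; try ring
  have hdh : d * Real.sqrt (R₁^2 - x₀^2)
      = (1 / 2) * Real.sqrt ((-d + R₁ + R₂) * (d + R₁ - R₂) * (d - R₁ + R₂) * (d + R₁ + R₂)) := by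
    have h4 : d^2 * (R₁^2 - x₀^2)
        = ((-d + R₁ + R₂) * (d + R₁ - R₂) * (d - R₁ + R₂) * (d + R₁ + R₂)) / 4 := by
      rw [hx₀def]; field_simp; try ring
    have : d * Real.sqrt (R₁^2 - x₀^2) = Real.sqrt (d^2 * (R₁^2 - x₀^2)) := by
      rw [Real.sqrt_mul (sq_nonneg d), Real.sqrt_sq hd.le]
    rw [this, h4, Real.sqrt_div' _ (by norm_num : (0:ℝ) ≤ 4)]
    have h42 : Real.sqrt 4 = 2 := by
      rw [show (4:ℝ) = 2^2 by norm_num, Real.sqrt_sq (by norm_num)]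
    rw [h42]; ring
  rw [Real.arccos_eq_pi_div_two_sub_arcsin, Real.arccos_eq_pi_div_two_sub_arcsin,
    ← harg1]
  have harcsin2 : Real.arcsin ((x₀ - d) / R₂) = -Real.arcsin ((d ^ 2 + R₂ ^ 2 - R₁ ^ 2) / (2 * d * R₂)) := by
    rw [harg2, Real.arcsin_neg]
  simp only [sub_zero, e0]
  rw [hsame, harcsin2,
    show Real.sqrt (R₂^2 - (-R₂)^2) = 0 by rw [neg_sq, sub_self, Real.sqrt_zero],
    show Real.sqrt (R₁^2 - R₁^2) = 0 by rw [sub_self, Real.sqrt_zero],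
    show Real.arcsin (R₁/R₁) = π/2 by rw [div_self hR₁.ne', Real.arcsin_one],
    show Real.arcsin (-R₂/R₂) = -(π/2) by rw [neg_div, div_self hR₂.ne', Real.arcsin_neg_one]]
  linear_combination -hdh

/-- Area of the lens formed by two intersecting discs in the plane: if
`|R₁ - R₂| < dist c₁ c₂ < R₁ + R₂` then the area of the intersection of the closed discs
`B(c₁, R₁)` and `B(c₂, R₂)` equals
`R₁² arccos((d² + R₁² - R₂²)/(2 d R₁)) + R₂² arccos((d² + R₂² - R₁²)/(2 d R₂))
  - (1/2)√((-d+R₁+R₂)(d+R₁-R₂)(d-R₁+R₂)(d+R₁+R₂))`. -/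
theorem lens_area
    (R₁ R₂ : ℝ) (hR₁ : 0 < R₁) (hR₂ : 0 < R₂)
    (c₁ c₂ : EuclideanSpace ℝ (Fin 2))
    (hlow : |R₁ - R₂| < dist c₁ c₂) (hhigh : dist c₁ c₂ < R₁ + R₂) :
    volume (Metric.closedBall c₁ R₁ ∩ Metric.closedBall c₂ R₂)
      = ENNReal.ofReal
          (R₁ ^ 2 * Real.arccos ((dist c₁ c₂ ^ 2 + R₁ ^ 2 - R₂ ^ 2) / (2 * dist c₁ c₂ * R₁))
            + R₂ ^ 2 * Real.arccos ((dist c₁ c₂ ^ 2 + R₂ ^ 2 - R₁ ^ 2) / (2 * dist c₁ c₂ * R₂))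
            - (1 / 2) * Real.sqrt ((-dist c₁ c₂ + R₁ + R₂) * (dist c₁ c₂ + R₁ - R₂)
                * (dist c₁ c₂ - R₁ + R₂) * (dist c₁ c₂ + R₁ + R₂))) := by
  have hd : 0 < dist c₁ c₂ := lt_of_le_of_lt (abs_nonneg _) hlow
  set d : ℝ := dist c₁ c₂ with hddef
  set v : EuclideanSpace ℝ (Fin 2) := d • (EuclideanSpace.single (0 : Fin 2) (1:ℝ)) with hvdef
  have hv0 : v 0 = d := by
    simp [hvdef, EuclideanSpace.single_apply]
  have hv1 : v 1 = 0 := by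
    simp [hvdef, EuclideanSpace.single_apply]
  have hnorm : ‖c₂ - c₁‖ = ‖v‖ := by
    rw [hvdef, norm_smul, EuclideanSpace.norm_single, ← dist_eq_norm, dist_comm]
    simp [Real.norm_eq_abs, abs_of_pos hd, hddef]
  set T := Submodule.reflection (ℝ ∙ ((c₂ - c₁) - v))ᗮ with hTdef
  have hT : T (c₂ - c₁) = v := Submodule.reflection_sub hnorm
  set f : EuclideanSpace ℝ (Fin 2) → EuclideanSpace ℝ (Fin 2) := fun x => T (x - c₁) with hfdef
  have hmp : MeasurePreserving f volume volume :=
    T.measurePreserving.comp (measurePreserving_sub_right volume c₁)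
  have himg : Metric.closedBall c₁ R₁ ∩ Metric.closedBall c₂ R₂
      = f ⁻¹' (Metric.closedBall 0 R₁ ∩ Metric.closedBall v R₂) := by
    ext x
    simp only [Set.mem_inter_iff, Set.mem_preimage, Metric.mem_closedBall]
    have e1 : dist (f x) 0 = dist x c₁ := by
      rw [dist_zero_right, hfdef]
      simp only
      rw [T.norm_map, ← dist_eq_norm]
    have e2 : dist (f x) v = dist x c₂ := by
      rw [← hT, hfdef]
      simp only
      rw [T.dist_map, dist_eq_norm, dist_eq_norm]
      congr 1
      abel
    rw [e1, e2]
  rw [himg, hmp.measure_preimage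
    ((measurableSet_closedBall.inter measurableSet_closedBall).nullMeasurableSet)]
  have hψ : MeasurePreserving
      ((MeasurableEquiv.finTwoArrow : (Fin 2 → ℝ) ≃ᵐ ℝ × ℝ)
        ∘ ((MeasurableEquiv.toLp 2 (Fin 2 → ℝ)).symm)) volume volume :=
    (volume_preserving_finTwoArrow ℝ).comp
      (EuclideanSpace.volume_preserving_symm_measurableEquiv_toLp (Fin 2))
  have hset : Metric.closedBall (0 : EuclideanSpace ℝ (Fin 2)) R₁ ∩ Metric.closedBall v R₂
      = ((MeasurableEquiv.finTwoArrow : (Fin 2 → ℝ) ≃ᵐ ℝ × ℝ)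
        ∘ ((MeasurableEquiv.toLp 2 (Fin 2 → ℝ)).symm)) ⁻¹'
        {p : ℝ × ℝ | p.1 ^ 2 + p.2 ^ 2 ≤ R₁ ^ 2 ∧ (p.1 - d) ^ 2 + p.2 ^ 2 ≤ R₂ ^ 2} := by
    ext x
    simp only [Set.mem_inter_iff, Set.mem_preimage, Metric.mem_closedBall, Function.comp_apply,
      Set.mem_setOf_eq, MeasurableEquiv.finTwoArrow_apply, MeasurableEquiv.piFinTwo_apply]
    have hme : ∀ i : Fin 2, ((MeasurableEquiv.toLp 2 (Fin 2 → ℝ)).symm x) i = x i := fun i => rfl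
    rw [hme 0, hme 1]
    have hb1 : dist x 0 ≤ R₁ ↔ (x 0) ^ 2 + (x 1) ^ 2 ≤ R₁ ^ 2 := by
      rw [EuclideanSpace.dist_eq, Fin.sum_univ_two, Real.sqrt_le_left hR₁.le]
      simp [Real.dist_eq, sq_abs]
    have hb2 : dist x v ≤ R₂ ↔ (x 0 - d) ^ 2 + (x 1) ^ 2 ≤ R₂ ^ 2 := by
      rw [EuclideanSpace.dist_eq, Fin.sum_univ_two, Real.sqrt_le_left hR₂.le, hv0, hv1]
      simp [Real.dist_eq, sq_abs]
    rw [hb1, hb2]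
  rw [hset, hψ.measure_preimage]
  · exact lens_core R₁ R₂ d hR₁ hR₂ hlow hhigh
  · have heq : {p : ℝ × ℝ | p.1 ^ 2 + p.2 ^ 2 ≤ R₁ ^ 2 ∧ (p.1 - d) ^ 2 + p.2 ^ 2 ≤ R₂ ^ 2}
        = {p : ℝ × ℝ | p.1 ^ 2 + p.2 ^ 2 ≤ R₁ ^ 2} ∩ {p : ℝ × ℝ | (p.1 - d) ^ 2 + p.2 ^ 2 ≤ R₂ ^ 2} := rfl
    rw [heq]
    exact (((isClosed_le (by fun_prop) continuous_const).measurableSet).inter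
      ((isClosed_le (by fun_prop) continuous_const).measurableSet)).nullMeasurableSet
end

section
/- Let α > 2, s > 0 and R > 0 be reals. Then the integral over the region {z ∈ ℝ² : ‖z‖ > R} (with respect to two-dimensional Lebesgue measure) of the function z ↦ 1 − 1/(1 + s·‖z‖^{−α}) equals π·s^{2/α}·∫_{R²·s^{−2/α}}^∞ 1/(1 + t^{α/2}) dt. In particular, taking s = T·R^{α} for T > 0, the integral equals π·R²·T^{2/α}·∫_{T^{−2/α}}^∞ 1/(1 + t^{α/2}) dt. (This is the integral appearing in the exponents of the macro-cell coverage probability F(Φ_m, Φ_s) in Lemmas 2 and 4, arising from the probability generating functional of the interfering tier restricted to the complement of the exclusion disc.) -/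
open Real MeasureTheory

private lemma interference_aux (α : ℝ) (hα : 2 < α) (s R : ℝ) (hs : 0 < s) (hR : 0 < R) :
    ∫ z in {z : EuclideanSpace ℝ (Fin 2) | R < ‖z‖},
        (1 - 1 / (1 + s * ‖z‖ ^ (-α)))
      = π * s ^ (2 / α) * ∫ t in Set.Ioi (R ^ 2 * s ^ (-(2 / α))), 1 / (1 + t ^ (α / 2)) := by
  have hα0 : (0:ℝ) < α := by linarith
  set c : ℝ := s ^ (-(2 / α)) with hc_def
  have hc : 0 < c := rpow_pos_of_pos hs _
  -- the common 1d integrand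
  set F : ℝ → ℝ := fun y => y * (1 / (1 + y ^ α * s⁻¹)) with hF_def
  -- Step 1: rewrite the RHS via the substitution t = y^2 * c on Ioi R
  have hderiv : ∀ y ∈ Set.Ioi R, HasDerivWithinAt (fun y : ℝ => y ^ 2 * c)
      (2 * y * c) (Set.Ioi R) y := by
    intro y _
    have := ((hasDerivAt_pow 2 y).mul_const c).hasDerivWithinAt (s := Set.Ioi R)
    simpa using this
  have hinj : Set.InjOn (fun y : ℝ => y ^ 2 * c) (Set.Ioi R) := by
    intro a ha b hb hab
    have ha' : R < a := ha
    have hb' : R < b := hb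
    have h2 : a ^ 2 = b ^ 2 := by
      field_simp at hab
      linarith
    nlinarith
  have himg : (fun y : ℝ => y ^ 2 * c) '' Set.Ioi R = Set.Ioi (R ^ 2 * c) := by
    ext x
    simp only [Set.mem_image, Set.mem_Ioi]
    constructor
    · rintro ⟨y, hy, rfl⟩
      have : R ^ 2 < y ^ 2 := by nlinarith
      exact mul_lt_mul_of_pos_right this hc
    · intro hx
      have hx0 : 0 < x := lt_trans (by positivity) hx
      refine ⟨Real.sqrt (x / c), ?_, ?_⟩
      · have hxc : R ^ 2 < x / c := (lt_div_iff₀ hc).2 hx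
        exact (Real.lt_sqrt hR.le).2 hxc
      · rw [Real.sq_sqrt (by positivity)]
        field_simp
  have hsub := integral_image_eq_integral_abs_deriv_smul (f' := fun y => 2 * y * c)
      measurableSet_Ioi hderiv hinj (fun t => 1 / (1 + t ^ (α / 2)))
  rw [himg] at hsub
  -- simplify the substituted integrand
  have hRHSint : ∫ t in Set.Ioi (R ^ 2 * c), 1 / (1 + t ^ (α / 2))
      = ∫ y in Set.Ioi R, (2 * c) * F y := by
    rw [hsub]
    refine setIntegral_congr_fun measurableSet_Ioi ?_
    intro y hy
    have hy0 : 0 < y := lt_trans hR hy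
    have h1 : (y ^ 2 * c) ^ (α / 2) = y ^ α * s⁻¹ := by
      rw [mul_rpow (by positivity) hc.le, ← rpow_natCast y 2, ← rpow_mul hy0.le,
        hc_def, ← rpow_mul hs.le]
      have e1 : ((2 : ℕ) : ℝ) * (α / 2) = α := by push_cast; ring
      have e2 : -(2 / α) * (α / 2) = -1 := by field_simp
      rw [e1, e2, rpow_neg_one]
    have habs : |2 * y * c| = 2 * y * c := abs_of_pos (by positivity)
    simp only [smul_eq_mul, hF_def]
    rw [habs, h1]
    ring
  -- Step 2: rewrite LHS as a 1d radial integral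
  set g₀ : ℝ → ℝ := fun y => 1 - 1 / (1 + s * y ^ (-α)) with hg₀
  have hmeas : MeasurableSet {z : EuclideanSpace ℝ (Fin 2) | R < ‖z‖} :=
    measurableSet_Ioi.preimage measurable_norm
  have hLHS : ∫ z in {z : EuclideanSpace ℝ (Fin 2) | R < ‖z‖},
      (1 - 1 / (1 + s * ‖z‖ ^ (-α)))
      = ∫ z : EuclideanSpace ℝ (Fin 2), (Set.Ioi R).indicator g₀ ‖z‖ := by
    rw [← integral_indicator hmeas]
    congr 1
  have hdim : Module.finrank ℝ (EuclideanSpace ℝ (Fin 2)) = 2 := finrank_euclideanSpace_fin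
  have hvol : (volume (Metric.ball (0 : EuclideanSpace ℝ (Fin 2)) 1)).toReal = π := by
    rw [EuclideanSpace.volume_ball]
    simp only [Fintype.card_fin]
    rw [show ((2:ℕ):ℝ) / 2 + 1 = 2 by norm_num, Real.Gamma_two]
    rw [ENNReal.ofReal_one, one_pow, one_mul, ENNReal.toReal_ofReal (by positivity)]
    rw [div_one, sq_sqrt pi_nonneg]
  have hradial := integral_fun_norm_addHaar (volume : Measure (EuclideanSpace ℝ (Fin 2)))
      ((Set.Ioi R).indicator g₀)
  rw [hdim, measureReal_def, hvol] at hradial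
  -- simplify the radial integral
  have h1d : ∫ y in Set.Ioi (0:ℝ), y ^ (2 - 1) • (Set.Ioi R).indicator g₀ y
      = ∫ y in Set.Ioi R, F y := by
    have heq : ∀ y ∈ Set.Ioi (0:ℝ), y ^ (2 - 1) • (Set.Ioi R).indicator g₀ y
        = (Set.Ioi R).indicator (fun y => y * g₀ y) y := by
      intro y _
      by_cases h : y ∈ Set.Ioi R <;> simp [Set.indicator_apply, h]
    rw [setIntegral_congr_fun measurableSet_Ioi heq, setIntegral_indicator measurableSet_Ioi,
      Set.Ioi_inter_Ioi, max_eq_right hR.le]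
    refine setIntegral_congr_fun measurableSet_Ioi ?_
    intro y hy
    have hy0 : 0 < y := lt_trans hR hy
    have hyα : 0 < y ^ α := rpow_pos_of_pos hy0 _
    have hkey : g₀ y = 1 / (1 + y ^ α * s⁻¹) := by
      simp only [hg₀]
      rw [rpow_neg hy0.le]
      have hd1 : (0:ℝ) < 1 + s * (y ^ α)⁻¹ := by positivity
      have hd2 : (0:ℝ) < 1 + y ^ α * s⁻¹ := by positivity
      field_simp
      ring
    simp only [hF_def]
    rw [hkey]
  rw [hLHS, hradial, h1d, hRHSint, integral_const_mul]
  have hsc : s ^ (2 / α) * s ^ (-(2 / α)) = 1 := by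
    rw [← rpow_add hs]; norm_num
  simp only [nsmul_eq_mul, smul_eq_mul, Nat.cast_ofNat, hc_def]
  linear_combination (-(2 * π * ∫ y in Set.Ioi R, F y)) * hsc

/-- Interference functional integral outside an exclusion disc: for `α > 2`, `s > 0`, `R > 0`,
`∫_{‖z‖ > R} (1 - 1/(1 + s ‖z‖^{-α})) dz = π s^{2/α} ∫_{R² s^{-2/α}}^∞ 1/(1 + t^{α/2}) dt`,
and in particular, with `s = T R^α` for `T > 0`, it equals
`π R² T^{2/α} ∫_{T^{-2/α}}^∞ 1/(1 + t^{α/2}) dt`. -/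
theorem interference_integral_outside_disc
    (α : ℝ) (hα : 2 < α) :
    (∀ s R : ℝ, 0 < s → 0 < R →
      ∫ z in {z : EuclideanSpace ℝ (Fin 2) | R < ‖z‖},
          (1 - 1 / (1 + s * ‖z‖ ^ (-α)))
        = π * s ^ (2 / α) * ∫ t in Set.Ioi (R ^ 2 * s ^ (-(2 / α))), 1 / (1 + t ^ (α / 2)))
    ∧ (∀ T R : ℝ, 0 < T → 0 < R →
      ∫ z in {z : EuclideanSpace ℝ (Fin 2) | R < ‖z‖},
          (1 - 1 / (1 + (T * R ^ α) * ‖z‖ ^ (-α)))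
        = π * R ^ 2 * T ^ (2 / α) * ∫ t in Set.Ioi (T ^ (-(2 / α))), 1 / (1 + t ^ (α / 2))) := by
  have hα0 : (0:ℝ) < α := by linarith
  refine ⟨fun s R hs hR => interference_aux α hα s R hs hR, fun T R hT hR => ?_⟩
  have hs : 0 < T * R ^ α := by positivity
  have h := interference_aux α hα (T * R ^ α) R hs hR
  have hRα : (0:ℝ) < R ^ α := rpow_pos_of_pos hR _
  have h1 : (T * R ^ α) ^ (2 / α) = T ^ (2 / α) * R ^ 2 := by
    rw [mul_rpow hT.le hRα.le, ← rpow_natCast R 2, ← rpow_mul hR.le]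
    congr 1
    push_cast
    field_simp
  have h2 : R ^ 2 * (T * R ^ α) ^ (-(2 / α)) = T ^ (-(2 / α)) := by
    rw [mul_rpow hT.le hRα.le, ← rpow_mul hR.le]
    have : α * -(2 / α) = -2 := by field_simp
    rw [this, ← rpow_natCast R 2]
    rw [show ((2:ℕ):ℝ) = 2 by norm_num]
    rw [← mul_assoc, mul_comm (R ^ (2:ℝ)) _, mul_assoc, ← rpow_add hR]
    norm_num
  rw [h, h1, h2]
  ring
end
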